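/- arXiv:2510.13361 — 4 statements merged into one kernel-verified Lean document; each statement's English description precedes it below -/
import Mathlib

section
/- For every test point z = (x, y), the loss gap of the global (parameter-averaged) predictors is controlled by the per-task mixed stability plus a curvature term: |ℓ(f(θ_g)(x), y) − ℓ(f(θ_g′)(x), y)| ≤ Σ_{a=1}^n γ_a ε_a + L·M·( Σ_{a=1}^n γ_a ‖θ_a − θ̄‖² + Σ_{a=1}^n γ_a ‖θ_a′ − θ̄‖² ). -/
open Finset

/-- Second-order Taylor bound with the `1/2` factor. -/
lemma taylor_half_bound
    {E : Type*} [NormedAddCommGroup E] [NormedSpace ℝ E]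
    {F : Type*} [NormedAddCommGroup F] [NormedSpace ℝ F]
    {U : Set E} (hUopen : IsOpen U) (hUconv : Convex ℝ U)
    {g : E → F} (hg : ContDiffOn ℝ 2 g U)
    {M : ℝ} (hM : ∀ ϑ ∈ U, ‖fderiv ℝ (fderiv ℝ g) ϑ‖ ≤ M)
    {p y : E} (hp : p ∈ U) (hy : y ∈ U) :
    ‖g y - g p - fderiv ℝ g p (y - p)‖ ≤ M / 2 * ‖y - p‖ ^ 2 := by
  have hdiff : ∀ z ∈ U, DifferentiableAt ℝ g z := fun z hz =>
    ((hg.differentiableOn (by norm_num)) z hz).differentiableAt (hUopen.mem_nhds hz)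
  have h1 : ContDiffOn ℝ 1 (fderiv ℝ g) U :=
    hg.fderiv_of_isOpen hUopen (by norm_num)
  have h1d : ∀ z ∈ U, DifferentiableAt ℝ (fderiv ℝ g) z := fun z hz =>
    ((h1.differentiableOn one_ne_zero) z hz).differentiableAt (hUopen.mem_nhds hz)
  have lip : ∀ z ∈ U, ‖fderiv ℝ g z - fderiv ℝ g p‖ ≤ M * ‖z - p‖ := fun z hz =>
    hUconv.norm_image_sub_le_of_norm_fderiv_le h1d hM hp hz
  set v := y - p with hv
  have hseg : ∀ t ∈ Set.Icc (0:ℝ) 1, p + t • v ∈ U := fun t ht =>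
    hUconv.add_smul_sub_mem hp hy ht
  set ψ : ℝ → F := fun t => g (p + t • v) - t • (fderiv ℝ g p v) with hψ
  have hψ' : ∀ t ∈ Set.Icc (0:ℝ) 1,
      HasDerivAt ψ (fderiv ℝ g (p + t • v) v - fderiv ℝ g p v) t := by
    intro t ht
    have hcurve : HasDerivAt (fun t : ℝ => p + t • v) v t := by
      simpa using ((hasDerivAt_id t).smul_const v).const_add p
    have h1 : HasDerivAt (fun t : ℝ => g (p + t • v)) (fderiv ℝ g (p + t • v) v) t :=
      (hdiff _ (hseg t ht)).hasFDerivAt.comp_hasDerivAt t hcurve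
    have h2 : HasDerivAt (fun t : ℝ => t • (fderiv ℝ g p v)) (fderiv ℝ g p v) t := by
      simpa using (hasDerivAt_id t).smul_const (fderiv ℝ g p v)
    exact h1.sub h2
  have key : ∀ s ∈ Set.Icc (0:ℝ) 1, ‖ψ s - ψ 0‖ ≤ M * ‖v‖ ^ 2 * s ^ 2 / 2 := by
    have hB : ∀ t : ℝ, HasDerivAt (fun t => M * ‖v‖ ^ 2 * t ^ 2 / 2) (M * ‖v‖ ^ 2 * t) t := by
      intro t
      have := ((hasDerivAt_pow 2 t).const_mul (M * ‖v‖ ^ 2)).div_const 2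
      exact this.congr_deriv (by rw [show (2:ℕ) - 1 = 1 from rfl]; push_cast; ring)
    have hf : ContinuousOn (fun t => ψ t - ψ 0) (Set.Icc (0:ℝ) 1) := fun t ht =>
      (((hψ' t ht).continuousAt.sub continuousAt_const).continuousWithinAt)
    have hf' : ∀ t ∈ Set.Ico (0:ℝ) 1, HasDerivWithinAt (fun t => ψ t - ψ 0)
        (fderiv ℝ g (p + t • v) v - fderiv ℝ g p v) (Set.Ici t) t := fun t ht =>
      (((hψ' t (Set.mem_Icc_of_Ico ht)).sub_const (ψ 0)).hasDerivWithinAt)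
    have bound : ∀ t ∈ Set.Ico (0:ℝ) 1,
        ‖fderiv ℝ g (p + t • v) v - fderiv ℝ g p v‖ ≤ M * ‖v‖ ^ 2 * t := by
      intro t ht
      have h0 : ‖fderiv ℝ g (p + t • v) v - fderiv ℝ g p v‖
          ≤ ‖fderiv ℝ g (p + t • v) - fderiv ℝ g p‖ * ‖v‖ := by
        simpa using (fderiv ℝ g (p + t • v) - fderiv ℝ g p).le_opNorm v
      have h1 : ‖fderiv ℝ g (p + t • v) - fderiv ℝ g p‖ ≤ M * (t * ‖v‖) := by
        have := lip _ (hseg t (Set.mem_Icc_of_Ico ht))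
        simpa [norm_smul, abs_of_nonneg ht.1] using this
      calc ‖fderiv ℝ g (p + t • v) v - fderiv ℝ g p v‖
          ≤ M * (t * ‖v‖) * ‖v‖ :=
            h0.trans (mul_le_mul_of_nonneg_right h1 (norm_nonneg v))
        _ = M * ‖v‖ ^ 2 * t := by ring
    have ha : ‖ψ 0 - ψ 0‖ ≤ M * ‖v‖ ^ 2 * 0 ^ 2 / 2 := by simp
    exact fun s hs =>
      image_norm_le_of_norm_deriv_right_le_deriv_boundary hf hf' ha hB bound hs
  have h1 := key 1 (by norm_num)
  have hval : ψ 1 - ψ 0 = g y - g p - fderiv ℝ g p (y - p) := by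
    simp only [ψ, hv, one_smul, zero_smul, sub_zero, add_sub_cancel]
    abel
  rw [hval] at h1
  calc ‖g y - g p - fderiv ℝ g p (y - p)‖ ≤ M * ‖v‖ ^ 2 * 1 ^ 2 / 2 := h1
    _ = M / 2 * ‖y - p‖ ^ 2 := by rw [hv]; ring

/-- Weighted Cauchy–Schwarz / Jensen for squares. -/
lemma jensen_sq {n : ℕ} (γ r : Fin n → ℝ) (hγ : ∀ a, 0 ≤ γ a) (hγsum : ∑ a, γ a = 1) :
    (∑ a, γ a * r a) ^ 2 ≤ ∑ a, γ a * r a ^ 2 := by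
  have h := Finset.sum_mul_sq_le_sq_mul_sq Finset.univ
    (fun a => Real.sqrt (γ a)) (fun a => Real.sqrt (γ a) * r a)
  have e1 : ∀ a : Fin n, Real.sqrt (γ a) * (Real.sqrt (γ a) * r a) = γ a * r a := by
    intro a; rw [← mul_assoc, Real.mul_self_sqrt (hγ a)]
  have e2 : ∀ a : Fin n, Real.sqrt (γ a) ^ 2 = γ a := fun a => Real.sq_sqrt (hγ a)
  have e3 : ∀ a : Fin n, (Real.sqrt (γ a) * r a) ^ 2 = γ a * r a ^ 2 := by
    intro a; rw [mul_pow, Real.sq_sqrt (hγ a)]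
  simp only [e1, e2, e3] at h
  simpa [hγsum] using h


/-- For every test point `z = (x, y)`, the loss gap of the global
(parameter-averaged) predictors trained on neighboring datasets is controlled by the
per-task mixed stability plus a curvature term:
`|ℓ(f θ_g x, y) - ℓ(f θ_g' x, y)| ≤ Σ_a γ_a ε_a
  + L·M·(Σ_a γ_a ‖θ_a - θ̄‖² + Σ_a γ_a ‖θ_a' - θ̄‖²)`. -/
theorem global_stability_bound
    {E : Type*} [NormedAddCommGroup E] [NormedSpace ℝ E]
    {F : Type*} [NormedAddCommGroup F] [NormedSpace ℝ F]
    {X Y : Type*}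
    (U : Set E) (hUopen : IsOpen U) (hUconv : Convex ℝ U)
    -- the model: for each input x, θ ↦ f θ x is C² on U with second derivative ≤ M
    (f : E → X → F)
    (hf : ∀ x : X, ContDiffOn ℝ 2 (fun ϑ => f ϑ x) U)
    (M : ℝ)
    (hM : ∀ x : X, ∀ ϑ ∈ U, ‖fderiv ℝ (fderiv ℝ (fun ϑ' => f ϑ' x)) ϑ‖ ≤ M)
    -- the loss is L-Lipschitz in its first argument
    (ℓ : F → Y → ℝ) (L : ℝ) (hL : 0 ≤ L)
    (hLips : ∀ (y : Y) (u v : F), |ℓ u y - ℓ v y| ≤ L * ‖u - v‖)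
    -- mixing weights
    (n : ℕ) (γ : Fin n → ℝ) (hγ : ∀ a, 0 ≤ γ a) (hγsum : ∑ a, γ a = 1)
    -- base parameters trained on the two neighboring dataset collections,
    -- and the previous global iterate θ̄
    (θ θ' : Fin n → E) (hθ : ∀ a, θ a ∈ U) (hθ' : ∀ a, θ' a ∈ U)
    (θbar : E) (hθbar : θbar ∈ U)
    -- the aggregated global parameters lie in U
    (hθg : (∑ a, γ a • θ a) ∈ U) (hθg' : (∑ a, γ a • θ' a) ∈ U)
    -- per-task stability constants and the mixed-predictor stability condition
    (ε : Fin n → ℝ) (hε : ∀ a, 0 ≤ ε a)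
    (hstab : ∀ (x : X) (y : Y),
      |ℓ (∑ a, γ a • f (θ a) x) y - ℓ (∑ a, γ a • f (θ' a) x) y| ≤ ∑ a, γ a * ε a) :
    ∀ (x : X) (y : Y),
      |ℓ (f (∑ a, γ a • θ a) x) y - ℓ (f (∑ a, γ a • θ' a) x) y| ≤
        (∑ a, γ a * ε a) +
          L * M * ((∑ a, γ a * ‖θ a - θbar‖ ^ 2) + ∑ a, γ a * ‖θ' a - θbar‖ ^ 2) := by
  intro x y
  have hM0 : 0 ≤ M := le_trans (by positivity) (hM x θbar hθbar)
  set g : E → F := fun ϑ => f ϑ x with hg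
  set A : E →L[ℝ] F := fderiv ℝ g θbar with hA
  -- Taylor remainder bound
  have taylor : ∀ w ∈ U, ‖g w - g θbar - A (w - θbar)‖ ≤ M / 2 * ‖w - θbar‖ ^ 2 := fun w hw =>
    taylor_half_bound hUopen hUconv (hf x) (hM x) hθbar hw
  -- key estimate: for any weights/points version
  have key : ∀ (ϑ : Fin n → E), (∀ a, ϑ a ∈ U) → (∑ a, γ a • ϑ a) ∈ U →
      ‖g (∑ a, γ a • ϑ a) - ∑ a, γ a • g (ϑ a)‖ ≤ M * ∑ a, γ a * ‖ϑ a - θbar‖ ^ 2 := by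
    intro ϑ hϑ hϑg
    set w := ∑ a, γ a • ϑ a with hw
    have hlin : A (w - θbar) = ∑ a, γ a • A (ϑ a - θbar) := by
      have : w - θbar = ∑ a, γ a • (ϑ a - θbar) := by
        rw [eq_comm]
        simp [smul_sub, Finset.sum_sub_distrib, ← Finset.sum_smul, hγsum]
        exact hw.symm
      rw [this, map_sum]
      simp [map_smul]
    have hdecomp : g w - ∑ a, γ a • g (ϑ a)
        = (g w - g θbar - A (w - θbar)) - ∑ a, γ a • (g (ϑ a) - g θbar - A (ϑ a - θbar)) := by
      rw [hlin]
      simp only [smul_sub, Finset.sum_sub_distrib, ← Finset.sum_smul, hγsum, one_smul]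
      abel
    rw [hdecomp]
    have hbd1 : ‖g w - g θbar - A (w - θbar)‖ ≤ M / 2 * ∑ a, γ a * ‖ϑ a - θbar‖ ^ 2 := by
      refine (taylor w hϑg).trans ?_
      have h1 : ‖w - θbar‖ ≤ ∑ a, γ a * ‖ϑ a - θbar‖ := by
        have : w - θbar = ∑ a, γ a • (ϑ a - θbar) := by
          rw [eq_comm]
          simp [smul_sub, Finset.sum_sub_distrib, ← Finset.sum_smul, hγsum]
          exact hw.symm
        rw [this]
        refine (norm_sum_le _ _).trans (le_of_eq ?_)
        refine Finset.sum_congr rfl fun a _ => ?_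
        rw [norm_smul, Real.norm_eq_abs, abs_of_nonneg (hγ a)]
      have h2 : ‖w - θbar‖ ^ 2 ≤ (∑ a, γ a * ‖ϑ a - θbar‖) ^ 2 :=
        pow_le_pow_left₀ (norm_nonneg _) h1 2
      have h3 := jensen_sq γ (fun a => ‖ϑ a - θbar‖) hγ hγsum
      exact mul_le_mul_of_nonneg_left (h2.trans h3) (by linarith)
    have hbd2 : ‖∑ a, γ a • (g (ϑ a) - g θbar - A (ϑ a - θbar))‖
        ≤ M / 2 * ∑ a, γ a * ‖ϑ a - θbar‖ ^ 2 := by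
      refine (norm_sum_le _ _).trans ?_
      rw [Finset.mul_sum]
      refine Finset.sum_le_sum fun a _ => ?_
      rw [norm_smul, Real.norm_eq_abs, abs_of_nonneg (hγ a)]
      calc γ a * ‖g (ϑ a) - g θbar - A (ϑ a - θbar)‖
          ≤ γ a * (M / 2 * ‖ϑ a - θbar‖ ^ 2) :=
            mul_le_mul_of_nonneg_left (taylor _ (hϑ a)) (hγ a)
        _ = M / 2 * (γ a * ‖ϑ a - θbar‖ ^ 2) := by ring
    calc ‖(g w - g θbar - A (w - θbar)) - ∑ a, γ a • (g (ϑ a) - g θbar - A (ϑ a - θbar))‖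
        ≤ ‖g w - g θbar - A (w - θbar)‖ + ‖∑ a, γ a • (g (ϑ a) - g θbar - A (ϑ a - θbar))‖ :=
          norm_sub_le _ _
      _ ≤ M / 2 * (∑ a, γ a * ‖ϑ a - θbar‖ ^ 2) + M / 2 * (∑ a, γ a * ‖ϑ a - θbar‖ ^ 2) := by
          gcongr
      _ = M * ∑ a, γ a * ‖ϑ a - θbar‖ ^ 2 := by ring
  have k1 := key θ hθ hθg
  have k2 := key θ' hθ' hθg'
  set S := ∑ a, γ a * ‖θ a - θbar‖ ^ 2 with hS
  set S' := ∑ a, γ a * ‖θ' a - θbar‖ ^ 2 with hS'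
  have t1 : |ℓ (g (∑ a, γ a • θ a)) y - ℓ (∑ a, γ a • g (θ a)) y| ≤ L * (M * S) :=
    (hLips y _ _).trans (mul_le_mul_of_nonneg_left k1 hL)
  have t2 : |ℓ (∑ a, γ a • g (θ' a)) y - ℓ (g (∑ a, γ a • θ' a)) y| ≤ L * (M * S') := by
    refine (hLips y _ _).trans (mul_le_mul_of_nonneg_left ?_ hL)
    rw [norm_sub_rev]
    exact k2
  have t3 := hstab x y
  calc |ℓ (f (∑ a, γ a • θ a) x) y - ℓ (f (∑ a, γ a • θ' a) x) y|
      ≤ |ℓ (g (∑ a, γ a • θ a)) y - ℓ (∑ a, γ a • g (θ a)) y|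
        + |ℓ (∑ a, γ a • g (θ a)) y - ℓ (∑ a, γ a • g (θ' a)) y|
        + |ℓ (∑ a, γ a • g (θ' a)) y - ℓ (g (∑ a, γ a • θ' a)) y| := by
        have h1 := abs_sub_le (ℓ (g (∑ a, γ a • θ a)) y) (ℓ (∑ a, γ a • g (θ a)) y)
          (ℓ (g (∑ a, γ a • θ' a)) y)
        have h2 := abs_sub_le (ℓ (∑ a, γ a • g (θ a)) y) (ℓ (∑ a, γ a • g (θ' a)) y)
          (ℓ (g (∑ a, γ a • θ' a)) y)
        linarith
    _ ≤ L * (M * S) + (∑ a, γ a * ε a) + L * (M * S') := by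
        gcongr
    _ = (∑ a, γ a * ε a) + L * M * (S + S') := by ring
end

section
/- Let γ_1, …, γ_n ≥ 0 with Σ_a γ_a = 1, let θ̄, θ_1, …, θ_n ∈ U, and set θ_g = Σ_a γ_a θ_a. If f : E → F is twice continuously differentiable on the open convex set U with second derivative bounded in norm by M on U, then the first-order (linear) terms in the Taylor expansions around θ̄ cancel and ‖f(θ_g) − Σ_{a=1}^n γ_a f(θ_a)‖ ≤ (M/2)·( ‖θ_g − θ̄‖² + Σ_{a=1}^n γ_a ‖θ_a − θ̄‖² ). -/
open Finset

/-- Quadratic Taylor remainder bound: if `f` is `C²` on an open convex set `U` with second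
derivative bounded by `M`, then `‖f x - f x₀ - f'(x₀)(x - x₀)‖ ≤ M/2 * ‖x - x₀‖²`. -/
lemma taylor_quadratic_bound
    {E : Type*} [NormedAddCommGroup E] [NormedSpace ℝ E]
    {F : Type*} [NormedAddCommGroup F] [NormedSpace ℝ F]
    (U : Set E) (hUopen : IsOpen U) (hUconv : Convex ℝ U)
    (f : E → F) (hf : ContDiffOn ℝ 2 f U)
    (M : ℝ) (hM : ∀ x ∈ U, ‖fderiv ℝ (fderiv ℝ f) x‖ ≤ M)
    (x₀ : E) (hx₀ : x₀ ∈ U) (x : E) (hx : x ∈ U) :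
    ‖f x - f x₀ - fderiv ℝ f x₀ (x - x₀)‖ ≤ M / 2 * ‖x - x₀‖ ^ 2 := by
  -- differentiability facts
  have hdF : ∀ y ∈ U, DifferentiableAt ℝ f y := fun y hy =>
    (hf.contDiffAt (hUopen.mem_nhds hy)).differentiableAt (by norm_num)
  have hderiv : ContDiffOn ℝ 1 (fderiv ℝ f) U := by
    exact hf.fderiv_of_isOpen (m := 1) hUopen (by norm_num)
  have hdF' : ∀ y ∈ U, DifferentiableAt ℝ (fderiv ℝ f) y := fun y hy =>
    (hderiv.contDiffAt (hUopen.mem_nhds hy)).differentiableAt one_ne_zero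
  -- Lipschitz bound on the derivative
  have hLip : ∀ y ∈ U, ‖fderiv ℝ f y - fderiv ℝ f x₀‖ ≤ M * ‖y - x₀‖ := fun y hy =>
    hUconv.norm_image_sub_le_of_norm_fderiv_le hdF' hM hx₀ hy
  set v := x - x₀ with hv
  -- the segment lies in U
  have hseg : ∀ t ∈ Set.Icc (0:ℝ) 1, x₀ + t • v ∈ U := by
    intro t ht
    have : (1 - t) • x₀ + t • x ∈ U := hUconv hx₀ hx (by linarith [ht.2]) ht.1 (by ring)
    convert this using 1
    simp only [hv, smul_sub]
    module
  -- the auxiliary function and its derivative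
  set g : ℝ → F := fun t => f (x₀ + t • v) - t • (fderiv ℝ f x₀ v) with hg
  have hgd : ∀ t ∈ Set.Icc (0:ℝ) 1,
      HasDerivAt g (fderiv ℝ f (x₀ + t • v) v - fderiv ℝ f x₀ v) t := by
    intro t ht
    have hc : HasDerivAt (fun t : ℝ => x₀ + t • v) v t := by
      simpa using ((hasDerivAt_id t).smul_const v).const_add x₀
    have h1 : HasDerivAt (fun t : ℝ => f (x₀ + t • v)) (fderiv ℝ f (x₀ + t • v) v) t :=
      (hdF _ (hseg t ht)).hasFDerivAt.comp_hasDerivAt t hc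
    have h2 : HasDerivAt (fun t : ℝ => t • (fderiv ℝ f x₀ v)) (fderiv ℝ f x₀ v) t := by
      simpa using (hasDerivAt_id t).smul_const (fderiv ℝ f x₀ v)
    exact h1.sub h2
  -- fencing
  have key : ∀ t ∈ Set.Icc (0:ℝ) 1, ‖g t - g 0‖ ≤ M / 2 * ‖v‖ ^ 2 * t ^ 2 := by
    intro t ht
    have hcont : ContinuousOn (fun t => g t - g 0) (Set.Icc (0:ℝ) 1) := fun s hs =>
      (((hgd s hs).continuousAt.sub continuousAt_const).continuousWithinAt)
    have hB : ∀ s : ℝ, HasDerivAt (fun s => M / 2 * ‖v‖ ^ 2 * s ^ 2) (M * ‖v‖ ^ 2 * s) s := by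
      intro s
      have := ((hasDerivAt_pow 2 s).const_mul (M / 2 * ‖v‖ ^ 2))
      exact this.congr_deriv (by ring)
    have := image_norm_le_of_norm_deriv_right_le_deriv_boundary
      (f := fun t => g t - g 0)
      (f' := fun t => fderiv ℝ f (x₀ + t • v) v - fderiv ℝ f x₀ v)
      hcont
      (fun s hs => by
        exact ((hgd s ⟨hs.1, hs.2.le⟩).sub_const (g 0)).hasDerivWithinAt)
      (by simp) hB
      (fun s hs => by
        have hs0 : (0:ℝ) ≤ s := hs.1
        have hmem : x₀ + s • v ∈ U := hseg s ⟨hs.1, hs.2.le⟩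
        calc ‖fderiv ℝ f (x₀ + s • v) v - fderiv ℝ f x₀ v‖
            = ‖(fderiv ℝ f (x₀ + s • v) - fderiv ℝ f x₀) v‖ := by
              simp [ContinuousLinearMap.sub_apply]
          _ ≤ ‖fderiv ℝ f (x₀ + s • v) - fderiv ℝ f x₀‖ * ‖v‖ :=
              ContinuousLinearMap.le_opNorm _ _
          _ ≤ M * ‖x₀ + s • v - x₀‖ * ‖v‖ := by
              gcongr; exact hLip _ hmem
          _ = M * ‖v‖ ^ 2 * s := by
              simp [norm_smul, abs_of_nonneg hs0]; ring)
    exact this ht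
  have h1 := key 1 (by norm_num)
  have : g 1 - g 0 = f x - f x₀ - fderiv ℝ f x₀ v := by
    simp [hg, hv]
    abel
  rw [this] at h1
  calc ‖f x - f x₀ - fderiv ℝ f x₀ (x - x₀)‖ ≤ M / 2 * ‖v‖ ^ 2 * 1 ^ 2 := h1
    _ = M / 2 * ‖x - x₀‖ ^ 2 := by rw [hv]; ring

theorem mixing_gap_second_order_bound
    {E : Type*} [NormedAddCommGroup E] [NormedSpace ℝ E]
    {F : Type*} [NormedAddCommGroup F] [NormedSpace ℝ F]
    (U : Set E) (hUopen : IsOpen U) (hUconv : Convex ℝ U)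
    (f : E → F) (hf : ContDiffOn ℝ 2 f U)
    (M : ℝ) (hM : ∀ x ∈ U, ‖fderiv ℝ (fderiv ℝ f) x‖ ≤ M)
    (n : ℕ) (γ : Fin n → ℝ) (hγ : ∀ a, 0 ≤ γ a) (hγsum : ∑ a, γ a = 1)
    (θbar : E) (hθbar : θbar ∈ U)
    (θ : Fin n → E) (hθ : ∀ a, θ a ∈ U) :
    ‖f (∑ a, γ a • θ a) - ∑ a, γ a • f (θ a)‖ ≤
      (M / 2) * (‖(∑ a, γ a • θ a) - θbar‖ ^ 2 + ∑ a, γ a * ‖θ a - θbar‖ ^ 2) := by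
  set θg := ∑ a, γ a • θ a with hθg
  have hθgU : θg ∈ U := hUconv.sum_mem (fun a _ => hγ a) hγsum (fun a _ => hθ a)
  have T := taylor_quadratic_bound U hUopen hUconv f hf M hM θbar hθbar
  set L := fderiv ℝ f θbar with hL
  have hsum : θg - θbar = ∑ a, γ a • (θ a - θbar) := by
    simp [smul_sub, Finset.sum_sub_distrib, ← Finset.sum_smul, hγsum, hθg]
  have hlin : L (θg - θbar) = ∑ a, γ a • L (θ a - θbar) := by
    rw [hsum, map_sum]
    simp
  have hdecomp : f θg - ∑ a, γ a • f (θ a) =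
      (f θg - f θbar - L (θg - θbar)) - ∑ a, γ a • (f (θ a) - f θbar - L (θ a - θbar)) := by
    have : ∑ a, γ a • (f (θ a) - f θbar - L (θ a - θbar)) =
        (∑ a, γ a • f (θ a)) - (∑ a, γ a) • f θbar - ∑ a, γ a • L (θ a - θbar) := by
      simp [smul_sub, Finset.sum_sub_distrib, Finset.sum_smul]
    rw [this, hγsum, hlin]
    module
  rw [hdecomp]
  calc ‖(f θg - f θbar - L (θg - θbar)) - ∑ a, γ a • (f (θ a) - f θbar - L (θ a - θbar))‖
      ≤ ‖f θg - f θbar - L (θg - θbar)‖ + ‖∑ a, γ a • (f (θ a) - f θbar - L (θ a - θbar))‖ :=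
        norm_sub_le _ _
    _ ≤ M / 2 * ‖θg - θbar‖ ^ 2 + ∑ a, γ a * (M / 2 * ‖θ a - θbar‖ ^ 2) := by
        gcongr
        · exact T θg hθgU
        · refine (norm_sum_le _ _).trans (Finset.sum_le_sum fun a _ => ?_)
          rw [norm_smul, Real.norm_eq_abs, abs_of_nonneg (hγ a)]
          exact mul_le_mul_of_nonneg_left (T (θ a) (hθ a)) (hγ a)
    _ = (M / 2) * (‖θg - θbar‖ ^ 2 + ∑ a, γ a * ‖θ a - θbar‖ ^ 2) := by
        rw [mul_add, Finset.mul_sum]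
        congr 1
        exact Finset.sum_congr rfl fun a _ => by ring
end

section
/- Let γ_1, …, γ_n ≥ 0 with Σ_a γ_a = 1, let θ̄, θ_1, …, θ_n ∈ U, and set θ_g = Σ_a γ_a θ_a. If f : E → F is twice continuously differentiable on the open convex set U with second derivative bounded in norm by M on U, then ‖f(θ_g) − Σ_{a=1}^n γ_a f(θ_a)‖ ≤ M · Σ_{a=1}^n γ_a ‖θ_a − θ̄‖². -/
open Finset

/-- Second-order Taylor bound: if `f` is `C²` on an open convex set `U` with second
derivative bounded by `M`, then the first-order Taylor remainder at `x` is bounded by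
`M / 2 * ‖y - x‖ ^ 2`. -/
theorem taylor_remainder_bound
    {E : Type*} [NormedAddCommGroup E] [NormedSpace ℝ E]
    {F : Type*} [NormedAddCommGroup F] [NormedSpace ℝ F]
    (U : Set E) (hUopen : IsOpen U) (hUconv : Convex ℝ U)
    (f : E → F) (hf : ContDiffOn ℝ 2 f U)
    (M : ℝ) (hM : ∀ x ∈ U, ‖fderiv ℝ (fderiv ℝ f) x‖ ≤ M)
    {x y : E} (hx : x ∈ U) (hy : y ∈ U) :
    ‖f y - f x - fderiv ℝ f x (y - x)‖ ≤ M / 2 * ‖y - x‖ ^ 2 := by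
  have h1 : ∀ z ∈ U, DifferentiableAt ℝ f z := fun z hz =>
    ((hf.contDiffAt (hUopen.mem_nhds hz)).of_le one_le_two).differentiableAt one_ne_zero
  have h2 : ∀ z ∈ U, DifferentiableAt ℝ (fderiv ℝ f) z := by
    intro z hz
    have : ContDiffAt ℝ 2 f z := hf.contDiffAt (hUopen.mem_nhds hz)
    have h := this.fderiv_right (m := 1) (by norm_num)
    exact h.differentiableAt one_ne_zero
  have lip : ∀ a ∈ U, ∀ b ∈ U, ‖fderiv ℝ f a - fderiv ℝ f b‖ ≤ M * ‖a - b‖ := fun a ha b hb =>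
    Convex.norm_image_sub_le_of_norm_fderiv_le h2 hM hUconv hb ha
  set v : E := y - x with hv
  set D : E →L[ℝ] F := fderiv ℝ f x with hD
  have hseg : ∀ t : ℝ, t ∈ Set.Icc (0:ℝ) 1 → x + t • v ∈ U := by
    intro t ht
    have : x + t • v = (1 - t) • x + t • y := by
      simp only [hv, smul_sub]; module
    rw [this]
    exact hUconv hx hy (by linarith [ht.2]) ht.1 (by ring)
  set g : ℝ → F := fun t => f (x + t • v) - t • D v - f x with hg
  have hg' : ∀ t ∈ Set.Icc (0:ℝ) 1,
      HasDerivAt g (fderiv ℝ f (x + t • v) v - D v) t := by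
    intro t ht
    have hc : HasDerivAt (fun t : ℝ => x + t • v) v t := by
      simpa using ((hasDerivAt_id t).smul_const v).const_add x
    have hfc : HasDerivAt (fun t : ℝ => f (x + t • v)) (fderiv ℝ f (x + t • v) v) t :=
      (h1 _ (hseg t ht)).hasFDerivAt.comp_hasDerivAt t hc
    have hlin : HasDerivAt (fun t : ℝ => t • D v) (D v) t := by
      simpa using (hasDerivAt_id t).smul_const (D v)
    exact (hfc.sub hlin).sub_const (f x)
  set B : ℝ → ℝ := fun t => M * ‖v‖ ^ 2 / 2 * t ^ 2 with hB
  have hB' : ∀ t : ℝ, HasDerivAt B (M * ‖v‖ ^ 2 * t) t := by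
    intro t
    have := (hasDerivAt_pow 2 t).const_mul (M * ‖v‖ ^ 2 / 2)
    simpa [hB] using this.congr_deriv (by ring)
  have bound : ∀ t ∈ Set.Ico (0:ℝ) 1, ‖fderiv ℝ f (x + t • v) v - D v‖ ≤ M * ‖v‖ ^ 2 * t := by
    intro t ht
    have hmem := hseg t ⟨ht.1, ht.2.le⟩
    calc ‖fderiv ℝ f (x + t • v) v - D v‖
        = ‖(fderiv ℝ f (x + t • v) - D) v‖ := by simp
      _ ≤ ‖fderiv ℝ f (x + t • v) - D‖ * ‖v‖ :=
          (fderiv ℝ f (x + t • v) - D).le_opNorm v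
      _ ≤ M * ‖x + t • v - x‖ * ‖v‖ :=
          mul_le_mul_of_nonneg_right (lip _ hmem _ hx) (norm_nonneg v)
      _ = M * ‖v‖ ^ 2 * t := by
          rw [add_sub_cancel_left, norm_smul, Real.norm_of_nonneg ht.1]; ring
  have h1' : ‖g 1‖ ≤ B 1 :=
    image_norm_le_of_norm_deriv_right_le_deriv_boundary
      (fun t ht => (hg' t ht).continuousAt.continuousWithinAt)
      (fun t ht => (hg' t (Set.Ico_subset_Icc_self ht)).hasDerivWithinAt)
      (by simp [hg, hB]) hB' bound ⟨zero_le_one, le_rfl⟩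
  simp only [hg, hB, one_smul, one_pow, mul_one] at h1'
  rw [show x + v = y from by simp [hv], sub_right_comm] at h1'
  exact h1'.trans_eq (by ring)

/-- For nonnegative weights `γ` summing to 1, base parameters
`θ a ∈ U` and a reference point `θ̄ ∈ U`, with `θ_g = Σ_a γ_a • θ_a`, if `f` is twice
continuously differentiable on the open convex set `U` with second derivative bounded in
norm by `M` on `U`, then `‖f θ_g - Σ_a γ_a • f (θ a)‖ ≤ M · Σ_a γ_a ‖θ a - θ̄‖²`. -/
theorem mixing_gap_compact_bound
    {E : Type*} [NormedAddCommGroup E] [NormedSpace ℝ E]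
    {F : Type*} [NormedAddCommGroup F] [NormedSpace ℝ F]
    (U : Set E) (hUopen : IsOpen U) (hUconv : Convex ℝ U)
    (f : E → F) (hf : ContDiffOn ℝ 2 f U)
    (M : ℝ) (hM : ∀ x ∈ U, ‖fderiv ℝ (fderiv ℝ f) x‖ ≤ M)
    (n : ℕ) (γ : Fin n → ℝ) (hγ : ∀ a, 0 ≤ γ a) (hγsum : ∑ a, γ a = 1)
    (θbar : E) (hθbar : θbar ∈ U)
    (θ : Fin n → E) (hθ : ∀ a, θ a ∈ U) :
    ‖f (∑ a, γ a • θ a) - ∑ a, γ a • f (θ a)‖ ≤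
      M * ∑ a, γ a * ‖θ a - θbar‖ ^ 2 := by
  have hM0 : 0 ≤ M := le_trans (norm_nonneg (fderiv ℝ (fderiv ℝ f) θbar)) (hM θbar hθbar)
  set θg : E := ∑ a, γ a • θ a with hθg
  have hθgU : θg ∈ U := hUconv.sum_mem (fun a _ => hγ a) hγsum (fun a _ => hθ a)
  set D : E →L[ℝ] F := fderiv ℝ f θbar with hD
  -- Taylor remainders
  have hT : ∀ z ∈ U, ‖f z - f θbar - D (z - θbar)‖ ≤ M / 2 * ‖z - θbar‖ ^ 2 := fun z hz =>
    taylor_remainder_bound U hUopen hUconv f hf M hM hθbar hz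
  -- algebraic identity
  have hsum1 : ∑ a, γ a • f θbar = f θbar := by
    rw [← Finset.sum_smul, hγsum, one_smul]
  have hsum2 : ∑ a, γ a • D (θ a - θbar) = D (θg - θbar) := by
    simp only [← D.map_smul, ← map_sum]
    congr 1
    rw [hθg]
    simp only [smul_sub, Finset.sum_sub_distrib, ← Finset.sum_smul, hγsum, one_smul]
  have hid : f θg - ∑ a, γ a • f (θ a) =
      (f θg - f θbar - D (θg - θbar)) -
        ∑ a, γ a • (f (θ a) - f θbar - D (θ a - θbar)) := by
    simp only [smul_sub, Finset.sum_sub_distrib, hsum1, hsum2]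
    abel
  rw [hid]
  have step1 : ‖(f θg - f θbar - D (θg - θbar)) -
      ∑ a, γ a • (f (θ a) - f θbar - D (θ a - θbar))‖ ≤
      M / 2 * ‖θg - θbar‖ ^ 2 + ∑ a, γ a * (M / 2 * ‖θ a - θbar‖ ^ 2) := by
    refine (norm_sub_le _ _).trans (add_le_add (hT θg hθgU) ?_)
    refine (norm_sum_le _ _).trans (Finset.sum_le_sum fun a _ => ?_)
    rw [norm_smul, Real.norm_of_nonneg (hγ a)]
    exact mul_le_mul_of_nonneg_left (hT (θ a) (hθ a)) (hγ a)
  refine step1.trans ?_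
  -- Jensen: ‖θg - θbar‖² ≤ ∑ γ a ‖θ a - θbar‖²
  have jensen : ‖θg - θbar‖ ^ 2 ≤ ∑ a, γ a * ‖θ a - θbar‖ ^ 2 := by
    have h1 : ‖θg - θbar‖ ≤ ∑ a, γ a * ‖θ a - θbar‖ := by
      have : θg - θbar = ∑ a, γ a • (θ a - θbar) := by
        simp only [hθg, smul_sub, Finset.sum_sub_distrib, ← Finset.sum_smul, hγsum, one_smul]
      rw [this]
      refine (norm_sum_le _ _).trans (le_of_eq ?_)
      refine Finset.sum_congr rfl fun a _ => ?_
      rw [norm_smul, Real.norm_of_nonneg (hγ a)]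
    have h2 : (∑ a, γ a * ‖θ a - θbar‖) ^ 2 ≤ ∑ a, γ a * ‖θ a - θbar‖ ^ 2 := by
      have hconv : ConvexOn ℝ (Set.Ici (0:ℝ)) (fun x : ℝ => x ^ 2) := convexOn_pow 2
      have := hconv.map_sum_le (t := Finset.univ) (w := γ)
        (p := fun a => ‖θ a - θbar‖) (fun a _ => hγ a) hγsum
        (fun a _ => norm_nonneg _)
      simpa [smul_eq_mul] using this
    calc ‖θg - θbar‖ ^ 2 ≤ (∑ a, γ a * ‖θ a - θbar‖) ^ 2 := by
          have h0 : (0:ℝ) ≤ ∑ a, γ a * ‖θ a - θbar‖ :=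
            Finset.sum_nonneg fun a _ => mul_nonneg (hγ a) (norm_nonneg _)
          exact pow_le_pow_left₀ (norm_nonneg _) h1 2
      _ ≤ ∑ a, γ a * ‖θ a - θbar‖ ^ 2 := h2
  calc M / 2 * ‖θg - θbar‖ ^ 2 + ∑ a, γ a * (M / 2 * ‖θ a - θbar‖ ^ 2)
      ≤ M / 2 * (∑ a, γ a * ‖θ a - θbar‖ ^ 2) +
        ∑ a, γ a * (M / 2 * ‖θ a - θbar‖ ^ 2) :=
        add_le_add (mul_le_mul_of_nonneg_left jensen (by linarith)) le_rfl
    _ = M * ∑ a, γ a * ‖θ a - θbar‖ ^ 2 := by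
        rw [Finset.mul_sum, Finset.mul_sum]
        rw [← Finset.sum_add_distrib]
        refine Finset.sum_congr rfl fun a _ => ?_
        ring
end

section
/- If, in addition, ℓ : F × Y → ℝ is L-Lipschitz in its first argument, then for every input x ∈ X and label y ∈ Y, the loss gap between the global-parameter predictor and the prediction-averaged ensemble satisfies |ℓ(f(θ_g)(x), y) − ℓ(Σ_{a=1}^n γ_a f(θ_a)(x), y)| ≤ L·M·Σ_{a=1}^n γ_a ‖θ_a − θ̄‖². -/
open Finset

open Set in
/-- Second-order Taylor bound on a convex set, from a Lipschitz bound on the derivative. -/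
lemma taylor_sq_bound' {E F : Type*} [NormedAddCommGroup E] [NormedSpace ℝ E]
    [NormedAddCommGroup F] [NormedSpace ℝ F] {U : Set E}
    (hUconv : Convex ℝ U) {f : E → F}
    (hd : ∀ u ∈ U, DifferentiableAt ℝ f u) {M : ℝ}
    (hlip : ∀ u ∈ U, ∀ v ∈ U, ‖fderiv ℝ f u - fderiv ℝ f v‖ ≤ M * ‖u - v‖)
    {x y : E} (hx : x ∈ U) (hy : y ∈ U) :
    ‖f y - f x - fderiv ℝ f x (y - x)‖ ≤ M / 2 * ‖y - x‖ ^ 2 := by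
  set v := y - x with hv
  have hseg : ∀ t ∈ Icc (0:ℝ) 1, x + t • v ∈ U := fun t ht =>
    hUconv.add_smul_sub_mem hx hy ht
  set T := fderiv ℝ f x with hT
  set g : ℝ → F := fun t => f (x + t • v) - t • (T v) - f x with hg
  have hg' : ∀ t ∈ Icc (0:ℝ) 1,
      HasDerivAt g (fderiv ℝ f (x + t • v) v - T v) t := by
    intro t ht
    have hc : HasDerivAt (fun t : ℝ => x + t • v) v t := by
      simpa using ((hasDerivAt_id t).smul_const v).const_add x
    have hF : HasFDerivAt f (fderiv ℝ f (x + t • v)) (x + t • v) :=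
      (hd _ (hseg t ht)).hasFDerivAt
    have h1 : HasDerivAt (fun t : ℝ => f (x + t • v)) (fderiv ℝ f (x + t • v) v) t :=
      hF.comp_hasDerivAt t hc
    have h2 : HasDerivAt (fun t : ℝ => t • (T v)) (T v) t := by
      simpa using (hasDerivAt_id t).smul_const (T v)
    exact (h1.sub h2).sub_const (f x)
  have hbound : ∀ t ∈ Icc (0:ℝ) 1, ‖fderiv ℝ f (x + t • v) v - T v‖ ≤ M * ‖v‖ ^ 2 * t := by
    intro t ht
    have h1 : ‖fderiv ℝ f (x + t • v) v - T v‖ ≤ ‖fderiv ℝ f (x + t • v) - T‖ * ‖v‖ := by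
      rw [← ContinuousLinearMap.sub_apply]
      exact ContinuousLinearMap.le_opNorm _ _
    have h2 : ‖fderiv ℝ f (x + t • v) - T‖ ≤ M * (t * ‖v‖) := by
      have := hlip _ (hseg t ht) _ hx
      simpa [norm_smul, abs_of_nonneg ht.1] using this
    calc ‖fderiv ℝ f (x + t • v) v - T v‖ ≤ M * (t * ‖v‖) * ‖v‖ :=
          h1.trans (mul_le_mul_of_nonneg_right h2 (norm_nonneg _))
      _ = M * ‖v‖ ^ 2 * t := by ring
  have hB : ∀ t : ℝ, HasDerivAt (fun s : ℝ => M / 2 * ‖v‖ ^ 2 * s ^ 2) (M * ‖v‖ ^ 2 * t) t := by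
    intro t
    have := (hasDerivAt_pow 2 t).const_mul (M / 2 * ‖v‖ ^ 2)
    refine this.congr_deriv ?_
    push_cast; ring
  have key : ∀ s ∈ Icc (0:ℝ) 1, ‖g s‖ ≤ M / 2 * ‖v‖ ^ 2 * s ^ 2 :=
    image_norm_le_of_norm_deriv_right_le_deriv_boundary
      (fun t ht => (hg' t ht).continuousAt.continuousWithinAt)
      (fun t ht => (hg' t (Ico_subset_Icc_self ht)).hasDerivWithinAt)
      (by simp [hg]) hB
      (fun t ht => hbound t (Ico_subset_Icc_self ht))
  have h1 := key 1 (by norm_num)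
  have : g 1 = f y - f x - T v := by simp [hg, hv]; abel
  rw [this] at h1
  simpa using h1


/-- If the loss `ℓ : F × Y → ℝ` is `L`-Lipschitz in its first argument,
then for every input `x` and label `y`, the loss gap between the global-parameter
predictor `f θ_g` and the prediction-averaged ensemble `Σ_a γ_a f (θ a)` satisfies
`|ℓ(f θ_g x, y) - ℓ(Σ_a γ_a f (θ a) x, y)| ≤ L·M·Σ_a γ_a ‖θ a - θ̄‖²`. -/
theorem loss_gap_global_vs_ensemble
    {E : Type*} [NormedAddCommGroup E] [NormedSpace ℝ E]
    {F : Type*} [NormedAddCommGroup F] [NormedSpace ℝ F]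
    {X Y : Type*}
    (U : Set E) (hUopen : IsOpen U) (hUconv : Convex ℝ U)
    (f : E → X → F)
    (hf : ∀ x : X, ContDiffOn ℝ 2 (fun ϑ => f ϑ x) U)
    (M : ℝ)
    (hM : ∀ x : X, ∀ ϑ ∈ U, ‖fderiv ℝ (fderiv ℝ (fun ϑ' => f ϑ' x)) ϑ‖ ≤ M)
    (ℓ : F → Y → ℝ) (L : ℝ) (hL : 0 ≤ L)
    (hLips : ∀ (y : Y) (u v : F), |ℓ u y - ℓ v y| ≤ L * ‖u - v‖)
    (n : ℕ) (γ : Fin n → ℝ) (hγ : ∀ a, 0 ≤ γ a) (hγsum : ∑ a, γ a = 1)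
    (θbar : E) (hθbar : θbar ∈ U)
    (θ : Fin n → E) (hθ : ∀ a, θ a ∈ U) :
    ∀ (x : X) (y : Y),
      |ℓ (f (∑ a, γ a • θ a) x) y - ℓ (∑ a, γ a • f (θ a) x) y| ≤
        L * M * ∑ a, γ a * ‖θ a - θbar‖ ^ 2 := by
  intro x y
  have hM0 : 0 ≤ M := (norm_nonneg (fderiv ℝ (fderiv ℝ fun ϑ' => f ϑ' x) θbar)).trans (hM x θbar hθbar)
  set fx : E → F := fun ϑ => f ϑ x with hfx
  -- differentiability facts
  have hd : ∀ u ∈ U, DifferentiableAt ℝ fx u := fun u hu =>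
    (((hf x).differentiableOn (by norm_num)) u hu).differentiableAt (hUopen.mem_nhds hu)
  have hd' : ∀ u ∈ U, DifferentiableAt ℝ (fderiv ℝ fx) u := fun u hu =>
    ((((hf x).fderiv_of_isOpen (m := 1) hUopen (by norm_num)).differentiableOn (by norm_num)) u
      hu).differentiableAt (hUopen.mem_nhds hu)
  have hlip : ∀ u ∈ U, ∀ v ∈ U, ‖fderiv ℝ fx u - fderiv ℝ fx v‖ ≤ M * ‖u - v‖ :=
    fun u hu v hv =>
      hUconv.norm_image_sub_le_of_norm_fderiv_le hd' (fun w hw => hM x w hw) hv hu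
  -- the global parameter
  set θg : E := ∑ a, γ a • θ a with hθg
  have hθgU : θg ∈ U := hUconv.sum_mem (fun a _ => hγ a) hγsum (fun a _ => hθ a)
  set T := fderiv ℝ fx θbar with hT
  -- Taylor remainders
  have hR : ∀ u ∈ U, ‖fx u - fx θbar - T (u - θbar)‖ ≤ M / 2 * ‖u - θbar‖ ^ 2 :=
    fun u hu => taylor_sq_bound' hUconv hd hlip hθbar hu
  -- algebraic identity
  have hsum1 : ∑ a, γ a • fx θbar = fx θbar := by
    rw [← Finset.sum_smul, hγsum, one_smul]
  have hsum2 : ∑ a, γ a • (θ a - θbar) = θg - θbar := by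
    simp only [smul_sub, Finset.sum_sub_distrib, ← Finset.sum_smul, hγsum, one_smul, hθg]
  have hsum3 : ∑ a, γ a • T (θ a - θbar) = T (θg - θbar) := by
    rw [← hsum2, map_sum]
    simp
  have key : fx θg - ∑ a, γ a • fx (θ a)
      = (fx θg - fx θbar - T (θg - θbar)) - ∑ a, γ a • (fx (θ a) - fx θbar - T (θ a - θbar)) := by
    simp only [smul_sub, Finset.sum_sub_distrib, hsum1, hsum3]
    abel
  -- Jensen : ‖θg - θbar‖² ≤ ∑ γ a ‖θ a - θbar‖²
  have hjen : ‖θg - θbar‖ ^ 2 ≤ ∑ a, γ a * ‖θ a - θbar‖ ^ 2 := by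
    have h1 : ‖θg - θbar‖ ≤ ∑ a, γ a * ‖θ a - θbar‖ := by
      rw [← hsum2]
      refine (norm_sum_le _ _).trans (le_of_eq ?_)
      refine Finset.sum_congr rfl fun a _ => ?_
      rw [norm_smul, Real.norm_eq_abs, abs_of_nonneg (hγ a)]
    have h2 : (∑ a, γ a * ‖θ a - θbar‖) ^ 2 ≤ ∑ a, γ a * ‖θ a - θbar‖ ^ 2 := by
      have := Finset.sum_sq_le_sum_mul_sum_of_sq_eq_mul Finset.univ
        (r := fun a => γ a * ‖θ a - θbar‖) (f := γ) (g := fun a => γ a * ‖θ a - θbar‖ ^ 2)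
        (fun a _ => hγ a) (fun a _ => mul_nonneg (hγ a) (sq_nonneg _))
        (fun a _ => by ring)
      simpa [hγsum] using this
    calc ‖θg - θbar‖ ^ 2 ≤ (∑ a, γ a * ‖θ a - θbar‖) ^ 2 := by
          apply pow_le_pow_left₀ (norm_nonneg _) h1
      _ ≤ _ := h2
  -- norm bound on the prediction gap
  have hgap : ‖fx θg - ∑ a, γ a • fx (θ a)‖ ≤ M * ∑ a, γ a * ‖θ a - θbar‖ ^ 2 := by
    rw [key]
    have hA : ‖fx θg - fx θbar - T (θg - θbar)‖ ≤ M / 2 * ∑ a, γ a * ‖θ a - θbar‖ ^ 2 :=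
      (hR θg hθgU).trans (by
        have := mul_le_mul_of_nonneg_left hjen (by positivity : (0:ℝ) ≤ M / 2)
        linarith)
    have hB : ‖∑ a, γ a • (fx (θ a) - fx θbar - T (θ a - θbar))‖
        ≤ M / 2 * ∑ a, γ a * ‖θ a - θbar‖ ^ 2 := by
      refine (norm_sum_le _ _).trans ?_
      rw [Finset.mul_sum]
      refine Finset.sum_le_sum fun a _ => ?_
      rw [norm_smul, Real.norm_eq_abs, abs_of_nonneg (hγ a)]
      calc γ a * ‖fx (θ a) - fx θbar - T (θ a - θbar)‖
          ≤ γ a * (M / 2 * ‖θ a - θbar‖ ^ 2) :=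
            mul_le_mul_of_nonneg_left (hR (θ a) (hθ a)) (hγ a)
        _ = M / 2 * (γ a * ‖θ a - θbar‖ ^ 2) := by ring
    calc ‖(fx θg - fx θbar - T (θg - θbar)) - ∑ a, γ a • (fx (θ a) - fx θbar - T (θ a - θbar))‖
        ≤ ‖fx θg - fx θbar - T (θg - θbar)‖
          + ‖∑ a, γ a • (fx (θ a) - fx θbar - T (θ a - θbar))‖ := norm_sub_le _ _
      _ ≤ M / 2 * ∑ a, γ a * ‖θ a - θbar‖ ^ 2 + M / 2 * ∑ a, γ a * ‖θ a - θbar‖ ^ 2 :=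
          add_le_add hA hB
      _ = M * ∑ a, γ a * ‖θ a - θbar‖ ^ 2 := by ring
  calc |ℓ (f θg x) y - ℓ (∑ a, γ a • f (θ a) x) y|
      ≤ L * ‖f θg x - ∑ a, γ a • f (θ a) x‖ := hLips y _ _
    _ ≤ L * (M * ∑ a, γ a * ‖θ a - θbar‖ ^ 2) := mul_le_mul_of_nonneg_left hgap hL
    _ = L * M * ∑ a, γ a * ‖θ a - θbar‖ ^ 2 := by ring
end
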